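/- Under the stated assumptions (Lemma 1, mean and variance), for every t ∈ ℤ one has E(Δy_t) = 0 and E((Δy_t)²) = 2 · E(σ²) · E(1/(1+φ)). -/

import Mathlib

open MeasureTheory ProbabilityTheory Filter

/-- Index type for the joint independence assumption: `none` indexes the pair of
random coefficients `(φ, σ)` and `some ℓ` indexes the standardized error `ε_ℓ`. -/
abbrev HetAR1.Codomain : Option ℤ → Type
  | none => ℝ × ℝ
  | some _ => ℝ

instance HetAR1.instMeasurableSpaceCodomain : ∀ i, MeasurableSpace (HetAR1.Codomain i)
  | none => inferInstanceAs (MeasurableSpace (ℝ × ℝ))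
  | some _ => inferInstanceAs (MeasurableSpace ℝ)

/-- The family consisting of the pair `(φ, σ)` together with all the errors `ε_ℓ`. -/
def HetAR1.family {Ω : Type*} (φ σ : Ω → ℝ) (ε : ℤ → Ω → ℝ) :
    ∀ i : Option ℤ, Ω → HetAR1.Codomain i
  | none => fun ω => (φ ω, σ ω)
  | some ℓ => ε ℓ

open scoped ENNReal NNReal

lemma aux_iIndepFun_ae_eq {Ω ι : Type*} [MeasurableSpace Ω] {P : Measure Ω} {β : ι → Type*}
    {m : ∀ i, MeasurableSpace (β i)} {f g : ∀ i, Ω → β i}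
    (hf : iIndepFun (m := m) f P) (h : ∀ i, f i =ᵐ[P] g i) : iIndepFun (m := m) g P := by
  rw [iIndepFun_iff_measure_inter_preimage_eq_mul] at hf ⊢
  intro S sets hsets
  have h1 : ∀ i, P (g i ⁻¹' sets i) = P (f i ⁻¹' sets i) := by
    intro i
    refine measure_congr (Filter.eventuallyEq_set.2 ?_)
    filter_upwards [h i] with ω hω
    simp [Set.mem_preimage, hω]
  have h2 : P (⋂ i ∈ S, g i ⁻¹' sets i) = P (⋂ i ∈ S, f i ⁻¹' sets i) := by
    refine measure_congr (Filter.eventuallyEq_set.2 ?_)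
    have : ∀ᵐ ω ∂P, ∀ i ∈ S, f i ω = g i ω :=
      (ae_ball_iff S.countable_toSet).2 fun i _ => h i
    filter_upwards [this] with ω hω
    simp only [Set.mem_iInter, Set.mem_preimage]
    exact ⟨fun H i hi => by rw [hω i hi]; exact H i hi,
           fun H i hi => by rw [← hω i hi]; exact H i hi⟩
  rw [h2, hf S hsets]
  exact Finset.prod_congr rfl fun i _ => (h1 i).symm

lemma aux_sq_integral {Ω : Type*} [MeasurableSpace Ω] {P : Measure Ω}
    {f : Ω → ℝ} (hf : MemLp f 2 P) :
    ∫ ω, (f ω) ^ 2 ∂P = ((eLpNorm f 2 P).toReal) ^ 2 := by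
  rw [hf.eLpNorm_eq_integral_rpow_norm two_ne_zero ENNReal.ofNat_ne_top]
  have h2 : (2 : ℝ≥0∞).toReal = (2 : ℝ) := by simp
  rw [h2]
  have hnn : 0 ≤ ∫ a, ‖f a‖ ^ (2:ℝ) ∂P := integral_nonneg fun a => by positivity
  rw [ENNReal.toReal_ofReal (by positivity)]
  rw [← Real.rpow_natCast ((∫ a, ‖f a‖ ^ (2:ℝ) ∂P) ^ (2:ℝ)⁻¹) 2, ← Real.rpow_mul hnn]
  norm_num


lemma aux_toReal_tendsto {X : ℕ → ℝ≥0∞} (h : Tendsto X atTop (nhds 0)) :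
    Tendsto (fun M => (X M).toReal) atTop (nhds 0) := by
  have := (ENNReal.tendsto_toReal (a := 0) (by simp)).comp h
  simpa [Function.comp_def] using this

lemma aux_tendsto_integral {Ω : Type*} [MeasurableSpace Ω] {P : Measure Ω}
    [IsProbabilityMeasure P] {X : ℕ → Ω → ℝ} {Y : Ω → ℝ}
    (hX : ∀ M, MemLp (X M) 2 P) (hY : MemLp Y 2 P)
    (h : Tendsto (fun M => eLpNorm (fun ω => X M ω - Y ω) 2 P) atTop (nhds 0)) :
    Tendsto (fun M => ∫ ω, X M ω ∂P) atTop (nhds (∫ ω, Y ω ∂P)) := by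
  have hdiff : ∀ M, MemLp (fun ω => X M ω - Y ω) 2 P := fun M => (hX M).sub hY
  rw [tendsto_iff_dist_tendsto_zero]
  refine squeeze_zero (fun M => dist_nonneg)
    (fun M => ?_) (aux_toReal_tendsto h)
  have hint : ∀ M, Integrable (X M) P := fun M => (hX M).integrable one_le_two
  have hintY : Integrable Y P := hY.integrable one_le_two
  rw [Real.dist_eq, ← integral_sub (hint M) hintY]
  calc |∫ ω, (X M ω - Y ω) ∂P| ≤ ∫ ω, |X M ω - Y ω| ∂P := by
        simpa [Real.norm_eq_abs] using
          norm_integral_le_integral_norm (μ := P) (fun ω => X M ω - Y ω)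
    _ = (eLpNorm (fun ω => X M ω - Y ω) 1 P).toReal := by
        rw [eLpNorm_one_eq_lintegral_enorm,
          ← integral_norm_eq_lintegral_enorm (hdiff M).aestronglyMeasurable]
        simp [Real.norm_eq_abs]
    _ ≤ (eLpNorm (fun ω => X M ω - Y ω) 2 P).toReal := by
        refine ENNReal.toReal_mono (hdiff M).2.ne ?_
        exact eLpNorm_le_eLpNorm_of_exponent_le one_le_two (hdiff M).aestronglyMeasurable

lemma aux_tendsto_integral_sq {Ω : Type*} [MeasurableSpace Ω] {P : Measure Ω}
    [IsProbabilityMeasure P] {X : ℕ → Ω → ℝ} {Y : Ω → ℝ}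
    (hX : ∀ M, MemLp (X M) 2 P) (hY : MemLp Y 2 P)
    (h : Tendsto (fun M => eLpNorm (fun ω => X M ω - Y ω) 2 P) atTop (nhds 0)) :
    Tendsto (fun M => ∫ ω, (X M ω) ^ 2 ∂P) atTop (nhds (∫ ω, (Y ω) ^ 2 ∂P)) := by
  have hdiff : ∀ M, MemLp (fun ω => X M ω - Y ω) 2 P := fun M => (hX M).sub hY
  have hd0 : Tendsto (fun M => (eLpNorm (fun ω => X M ω - Y ω) 2 P).toReal)
      atTop (nhds 0) := aux_toReal_tendsto h
  have hnorm : Tendsto (fun M => (eLpNorm (X M) 2 P).toReal) atTop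
      (nhds ((eLpNorm Y 2 P).toReal)) := by
    rw [tendsto_iff_dist_tendsto_zero]
    refine squeeze_zero (fun M => dist_nonneg) (fun M => ?_) hd0
    have h1 : eLpNorm (X M) 2 P ≤ eLpNorm (fun ω => X M ω - Y ω) 2 P + eLpNorm Y 2 P := by
      have : X M = fun ω => (X M ω - Y ω) + Y ω := by funext ω; ring
      nth_rewrite 1 [this]
      exact eLpNorm_add_le (hdiff M).aestronglyMeasurable hY.aestronglyMeasurable one_le_two
    have h2 : eLpNorm Y 2 P ≤ eLpNorm (fun ω => X M ω - Y ω) 2 P + eLpNorm (X M) 2 P := by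
      have : Y = fun ω => (Y ω - X M ω) + X M ω := by funext ω; ring
      nth_rewrite 1 [this]
      refine le_trans (eLpNorm_add_le ((hY.sub (hX M)).aestronglyMeasurable)
        (hX M).aestronglyMeasurable one_le_two) ?_
      gcongr
      rw [show (fun ω => Y ω - X M ω) = -(fun ω => X M ω - Y ω) from by
        funext ω; simp [neg_sub], eLpNorm_neg]
    rw [Real.dist_eq, abs_sub_le_iff]
    constructor
    · have := ENNReal.toReal_mono (ENNReal.add_ne_top.2 ⟨(hdiff M).2.ne, hY.2.ne⟩) h1
      rw [ENNReal.toReal_add (hdiff M).2.ne hY.2.ne] at this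
      linarith
    · have := ENNReal.toReal_mono (ENNReal.add_ne_top.2 ⟨(hdiff M).2.ne, (hX M).2.ne⟩) h2
      rw [ENNReal.toReal_add (hdiff M).2.ne (hX M).2.ne] at this
      linarith
  have hfn : (fun M => ∫ ω, (X M ω)^2 ∂P)
      = fun M => ((eLpNorm (X M) 2 P).toReal)^2 :=
    funext fun M => aux_sq_integral (hX M)
  rw [hfn, aux_sq_integral hY]
  exact hnorm.pow 2

lemma aux_L2_mul_integrable {Ω : Type*} [MeasurableSpace Ω] {P : Measure Ω} {f g : Ω → ℝ}
    (hf : MemLp f 2 P) (hg : MemLp g 2 P) : Integrable (fun ω => f ω * g ω) P := by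
  have h : (1 : ℝ≥0∞) / 1 = 1 / 2 + 1 / 2 := by
    rw [ENNReal.add_halves]; norm_num
  have := hg.smul hf (p := 2) (q := 2) (r := 1)
  rw [← memLp_one_iff_integrable]
  exact this

/-- (Lemma 1, mean and variance) Under the stated assumptions, for every `t ∈ ℤ`,
`E(Δy_t) = 0` and `E((Δy_t)²) = 2 · E(σ²) · E(1/(1+φ))`. -/
theorem het_first_diff_mean_variance
    {Ω : Type*} [MeasurableSpace Ω] (P : Measure Ω) [IsProbabilityMeasure P]
    (φ σ : Ω → ℝ) (ε : ℤ → Ω → ℝ) (ε₀ : ℝ) (hε₀ : 0 < ε₀)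
    (hφm : Measurable φ) (hφbd : ∀ᵐ ω ∂P, -1 + ε₀ ≤ φ ω ∧ φ ω ≤ 1)
    (hσm : Measurable σ) (hσ0 : ∀ ω, 0 ≤ σ ω)
    (hσ2 : Integrable (fun ω => (σ ω) ^ 2) P)
    (hε2 : ∀ ℓ : ℤ, MemLp (ε ℓ) 2 P)
    (hεmean : ∀ ℓ : ℤ, ∫ ω, ε ℓ ω ∂P = 0)
    (hεvar : ∀ ℓ : ℤ, ∫ ω, (ε ℓ ω) ^ 2 ∂P = 1)
    (hindep : iIndepFun (m := HetAR1.instMeasurableSpaceCodomain) (HetAR1.family φ σ ε) P)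
    (hφσ : IndepFun φ σ P)
    (Δy : ℤ → Ω → ℝ)
    (hΔ2 : ∀ t : ℤ, MemLp (Δy t) 2 P)
    (hΔrep : ∀ t : ℤ, ∀ᵐ ω ∂P,
      (Summable fun ℓ : ℕ => |φ ω ^ ℓ * ε (t - ((ℓ : ℤ) + 1)) ω|) ∧
      Δy t ω = σ ω * (ε t ω -
        (1 - φ ω) * ∑' ℓ : ℕ, φ ω ^ ℓ * ε (t - ((ℓ : ℤ) + 1)) ω))
    (hΔL2 : ∀ t : ℤ, Tendsto (fun M : ℕ =>
        eLpNorm (fun ω => σ ω * (ε t ω -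
          (1 - φ ω) * ∑ ℓ ∈ Finset.range M, φ ω ^ ℓ * ε (t - ((ℓ : ℤ) + 1)) ω)
          - Δy t ω) 2 P)
      atTop (nhds 0)) :
    ∀ t : ℤ,
      (∫ ω, Δy t ω ∂P = 0) ∧
      (∫ ω, (Δy t ω) ^ 2 ∂P =
        2 * (∫ ω, (σ ω) ^ 2 ∂P) * (∫ ω, 1 / (1 + φ ω) ∂P)) := by
  classical
  -- measurable modifications of the errors
  set e : ℤ → Ω → ℝ := fun ℓ => ((hε2 ℓ).aestronglyMeasurable).mk (ε ℓ) with he_def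
  have he_meas : ∀ ℓ, Measurable (e ℓ) := fun ℓ =>
    ((hε2 ℓ).aestronglyMeasurable).stronglyMeasurable_mk.measurable
  have heq : ∀ ℓ, ε ℓ =ᵐ[P] e ℓ := fun ℓ => ((hε2 ℓ).aestronglyMeasurable).ae_eq_mk
  have he2 : ∀ ℓ, MemLp (e ℓ) 2 P := fun ℓ => (hε2 ℓ).ae_eq (heq ℓ)
  have hemean : ∀ ℓ, ∫ ω, e ℓ ω ∂P = 0 := fun ℓ => by
    rw [← integral_congr_ae (heq ℓ)]; exact hεmean ℓ
  have hevar : ∀ ℓ, ∫ ω, (e ℓ ω) ^ 2 ∂P = 1 := fun ℓ => by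
    have h2 : ∫ ω, (ε ℓ ω) ^ 2 ∂P = ∫ ω, (e ℓ ω) ^ 2 ∂P :=
      integral_congr_ae (by filter_upwards [heq ℓ] with ω h; rw [h])
    rw [← h2]; exact hεvar ℓ
  have hind : iIndepFun (m := HetAR1.instMeasurableSpaceCodomain) (HetAR1.family φ σ e) P := by
    refine aux_iIndepFun_ae_eq hindep fun i => ?_
    cases i with
    | none => exact Filter.EventuallyEq.rfl
    | some ℓ => exact heq ℓ
  have hFmeas : ∀ i, Measurable (HetAR1.family φ σ e i) := fun i => by
    cases i with
    | none => exact hφm.prodMk hσm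
    | some ℓ => exact he_meas ℓ
  have hφσmeas : Measurable (fun ω => (φ ω, σ ω)) := hφm.prodMk hσm
  -- independence helpers
  have indA : ∀ (g : ℝ × ℝ → ℝ), Measurable g → ∀ a : ℤ,
      IndepFun (fun ω => g (φ ω, σ ω)) (e a) P := fun g hg a =>
    (hind.indepFun (show (none : Option ℤ) ≠ some a by simp)).comp hg measurable_id
  have indB : ∀ (g : ℝ × ℝ → ℝ), Measurable g → ∀ a b : ℤ, a ≠ b →
      IndepFun (fun ω => g (φ ω, σ ω) * e a ω) (e b) P := by
    intro g hg a b hab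
    have h := hind.indepFun_prodMk hFmeas none (some a) (some b) (by simp)
      (by simpa using hab)
    exact h.comp (show Measurable (fun p : (ℝ × ℝ) × ℝ => g p.1 * p.2) from
      (hg.comp measurable_fst).mul measurable_snd) measurable_id
  -- integral identities
  have key0 : ∀ (g : ℝ × ℝ → ℝ), Measurable g → ∀ a : ℤ,
      ∫ ω, g (φ ω, σ ω) * e a ω ∂P = 0 := by
    intro g hg a
    rw [(indA g hg a).integral_fun_mul_eq_mul_integral ((hg.comp hφσmeas).aestronglyMeasurable)
      (he_meas a).aestronglyMeasurable, hemean a, mul_zero]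
  have key1 : ∀ (g : ℝ × ℝ → ℝ), Measurable g → ∀ a b : ℤ, a ≠ b →
      ∫ ω, g (φ ω, σ ω) * e a ω * e b ω ∂P = 0 := by
    intro g hg a b hab
    rw [(indB g hg a b hab).integral_fun_mul_eq_mul_integral
      (((hg.comp hφσmeas).mul (he_meas a)).aestronglyMeasurable)
      (he_meas b).aestronglyMeasurable, hemean b, mul_zero]
  have key2 : ∀ (g : ℝ × ℝ → ℝ), Measurable g → ∀ a : ℤ,
      ∫ ω, g (φ ω, σ ω) * (e a ω) ^ 2 ∂P = ∫ ω, g (φ ω, σ ω) ∂P := by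
    intro g hg a
    have hi : IndepFun (fun ω => g (φ ω, σ ω)) (fun ω => (e a ω) ^ 2) P :=
      (indA g hg a).comp measurable_id (measurable_id.pow_const 2)
    rw [hi.integral_fun_mul_eq_mul_integral ((hg.comp hφσmeas).aestronglyMeasurable)
      (((he_meas a).pow_const 2).aestronglyMeasurable), hevar a, mul_one]
  -- square integrability facts
  have hσ2' : MemLp σ 2 P := (memLp_two_iff_integrable_sq hσm.aestronglyMeasurable).2 hσ2
  have hbdd : ∀ (g : ℝ × ℝ → ℝ) (C : ℝ), Measurable g → 0 ≤ C →
      (∀ᵐ ω ∂P, |g (φ ω, σ ω)| ≤ C * σ ω) →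
      MemLp (fun ω => g (φ ω, σ ω)) 2 P := by
    intro g C hg hC hbd
    refine MemLp.of_le (hσ2'.const_mul C) ((hg.comp hφσmeas).aestronglyMeasurable) ?_
    filter_upwards [hbd] with ω h
    rw [Real.norm_eq_abs, Real.norm_eq_abs, abs_of_nonneg (mul_nonneg hC (hσ0 ω))]
    exact h
  have hprodL2 : ∀ (g : ℝ × ℝ → ℝ), Measurable g → MemLp (fun ω => g (φ ω, σ ω)) 2 P →
      ∀ a : ℤ, MemLp (fun ω => g (φ ω, σ ω) * e a ω) 2 P := by
    intro g hg hgL2 a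
    have hm : AEStronglyMeasurable (fun ω => g (φ ω, σ ω) * e a ω) P :=
      ((hg.comp hφσmeas).mul (he_meas a)).aestronglyMeasurable
    rw [memLp_two_iff_integrable_sq hm]
    have hi : IndepFun (fun ω => (g (φ ω, σ ω)) ^ 2) (fun ω => (e a ω) ^ 2) P :=
      (indA g hg a).comp (measurable_id.pow_const 2) (measurable_id.pow_const 2)
    have hInt := hi.integrable_mul hgL2.integrable_sq (he2 a).integrable_sq
    exact hInt.congr (ae_of_all _ fun ω => by simp only [Pi.mul_apply]; ring)
  -- fix t
  intro t
  set A : ℕ → ℤ := fun ℓ => t - ((ℓ : ℤ) + 1) with hA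
  have hAt : ∀ ℓ : ℕ, A ℓ ≠ t := fun ℓ => by simp only [hA]; omega
  have hAinj : ∀ ℓ k : ℕ, ℓ ≠ k → A ℓ ≠ A k := fun ℓ k h => by
    simp only [hA]; omega
  set c : ℕ → ℝ × ℝ → ℝ := fun ℓ p => p.2 * ((1 - p.1) * p.1 ^ ℓ) with hc
  have hcm : ∀ ℓ, Measurable (c ℓ) := fun ℓ =>
    measurable_snd.mul ((measurable_const.sub measurable_fst).mul
      (measurable_fst.pow_const ℓ))
  set X : ℕ → Ω → ℝ := fun M ω =>
    σ ω * e t ω - ∑ ℓ ∈ Finset.range M, c ℓ (φ ω, σ ω) * e (A ℓ) ω with hX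
  have hφabs : ∀ᵐ ω ∂P, |φ ω| ≤ 1 ∧ |1 - φ ω| ≤ 2 ∧ ε₀ ≤ 1 + φ ω := by
    filter_upwards [hφbd] with ω ⟨h1, h2⟩
    exact ⟨abs_le.2 ⟨by linarith, h2⟩, abs_le.2 ⟨by linarith, by linarith⟩, by linarith⟩
  have hcL2 : ∀ ℓ, MemLp (fun ω => c ℓ (φ ω, σ ω)) 2 P := by
    intro ℓ
    refine hbdd (c ℓ) 2 (hcm ℓ) (by norm_num) ?_
    filter_upwards [hφabs] with ω ⟨h1, h2, _⟩
    have h3 : |φ ω| ^ ℓ ≤ 1 := pow_le_one₀ (abs_nonneg _) h1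
    calc |c ℓ (φ ω, σ ω)| = σ ω * (|1 - φ ω| * |φ ω| ^ ℓ) := by
          simp [hc, abs_mul, abs_of_nonneg (hσ0 ω), abs_pow]
      _ ≤ σ ω * (2 * 1) := by
          refine mul_le_mul_of_nonneg_left ?_ (hσ0 ω)
          exact mul_le_mul h2 h3 (by positivity) (by norm_num)
      _ = 2 * σ ω := by ring
  have hσL2g : MemLp (fun ω => (fun p : ℝ × ℝ => p.2) (φ ω, σ ω)) 2 P := hσ2'
  have huL2 : MemLp (fun ω => σ ω * e t ω) 2 P :=
    hprodL2 (fun p => p.2) measurable_snd hσL2g t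
  have hdL2 : ∀ ℓ, MemLp (fun ω => c ℓ (φ ω, σ ω) * e (A ℓ) ω) 2 P := fun ℓ =>
    hprodL2 (c ℓ) (hcm ℓ) (hcL2 ℓ) (A ℓ)
  have hXL2 : ∀ M, MemLp (X M) 2 P := by
    intro M
    have h2 := memLp_finset_sum' (μ := P) (p := 2) (Finset.range M)
      (fun ℓ _ => hdL2 ℓ)
    refine (huL2.sub h2).ae_eq (ae_of_all _ fun ω => ?_)
    simp [hX, Finset.sum_apply]
  -- mean of the truncations
  have hmean0 : ∀ M, ∫ ω, X M ω ∂P = 0 := by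
    intro M
    have hint2 : ∀ ℓ ∈ Finset.range M,
        Integrable (fun ω => c ℓ (φ ω, σ ω) * e (A ℓ) ω) P := fun ℓ _ =>
      (hdL2 ℓ).integrable one_le_two
    simp only [hX]
    rw [integral_sub (huL2.integrable one_le_two) (integrable_finset_sum _ hint2),
      integral_finset_sum _ hint2]
    have h0 : ∫ ω, σ ω * e t ω ∂P = 0 := by
      simpa using key0 (fun p : ℝ × ℝ => p.2) measurable_snd t
    rw [h0, Finset.sum_eq_zero fun ℓ _ => key0 (c ℓ) (hcm ℓ) (A ℓ)]
    simp
  -- second moment of the truncations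
  have hgm2 : ∀ ℓ : ℕ, Measurable (fun p : ℝ × ℝ => p.2 ^ 2 * ((1 - p.1) * p.1 ^ ℓ)) :=
    fun ℓ => (measurable_snd.pow_const 2).mul
      ((measurable_const.sub measurable_fst).mul (measurable_fst.pow_const ℓ))
  have hsqint : ∀ M, ∫ ω, (X M ω) ^ 2 ∂P =
      ∫ ω, (σ ω) ^ 2 ∂P + ∑ ℓ ∈ Finset.range M, ∫ ω, c ℓ (φ ω, σ ω) ^ 2 ∂P := by
    intro M
    have expand : ∀ ω, (X M ω) ^ 2 =
        (σ ω * e t ω) ^ 2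
        - 2 * ∑ ℓ ∈ Finset.range M, (σ ω * e t ω) * (c ℓ (φ ω, σ ω) * e (A ℓ) ω)
        + ∑ ℓ ∈ Finset.range M, ∑ k ∈ Finset.range M,
            (c ℓ (φ ω, σ ω) * e (A ℓ) ω) * (c k (φ ω, σ ω) * e (A k) ω) := by
      intro ω
      simp only [hX]
      rw [sub_sq]
      congr 1
      · congr 1
        simp only [Finset.mul_sum]
        exact Finset.sum_congr rfl fun i _ => by ring
      · rw [sq, Finset.sum_mul_sum]
    have hI1 : Integrable (fun ω => (σ ω * e t ω) ^ 2) P := huL2.integrable_sq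
    have hI2 : ∀ ℓ ∈ Finset.range M, Integrable
        (fun ω => (σ ω * e t ω) * (c ℓ (φ ω, σ ω) * e (A ℓ) ω)) P := fun ℓ _ =>
      aux_L2_mul_integrable huL2 (hdL2 ℓ)
    have hI3 : ∀ ℓ ∈ Finset.range M, ∀ k ∈ Finset.range M, Integrable
        (fun ω => (c ℓ (φ ω, σ ω) * e (A ℓ) ω) * (c k (φ ω, σ ω) * e (A k) ω)) P :=
      fun ℓ _ k _ => aux_L2_mul_integrable (hdL2 ℓ) (hdL2 k)
    have hIs : Integrable (fun ω => 2 * ∑ ℓ ∈ Finset.range M,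
        (σ ω * e t ω) * (c ℓ (φ ω, σ ω) * e (A ℓ) ω)) P :=
      (integrable_finset_sum _ hI2).const_mul 2
    have hIw : Integrable (fun ω => ∑ ℓ ∈ Finset.range M, ∑ k ∈ Finset.range M,
        (c ℓ (φ ω, σ ω) * e (A ℓ) ω) * (c k (φ ω, σ ω) * e (A k) ω)) P :=
      integrable_finset_sum _ fun ℓ hℓ => integrable_finset_sum _ (hI3 ℓ hℓ)
    have hIsub : Integrable (fun ω => (σ ω * e t ω) ^ 2 - 2 * ∑ ℓ ∈ Finset.range M,
        (σ ω * e t ω) * (c ℓ (φ ω, σ ω) * e (A ℓ) ω)) P := hI1.sub hIs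
    rw [integral_congr_ae (ae_of_all _ expand)]
    rw [integral_add hIsub hIw, integral_sub hI1 hIs, integral_const_mul,
      integral_finset_sum _ hI2,
      integral_finset_sum _ (fun ℓ hℓ => integrable_finset_sum _ (hI3 ℓ hℓ)),
      Finset.sum_congr rfl (fun ℓ hℓ => integral_finset_sum _ (hI3 ℓ hℓ))]
    have hval1 : ∫ ω, (σ ω * e t ω) ^ 2 ∂P = ∫ ω, (σ ω) ^ 2 ∂P := by
      have h := key2 (fun p : ℝ × ℝ => p.2 ^ 2) (measurable_snd.pow_const 2) t
      rw [← h]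
      exact integral_congr_ae (ae_of_all _ fun ω => by ring)
    have hval2 : ∀ ℓ ∈ Finset.range M,
        ∫ ω, (σ ω * e t ω) * (c ℓ (φ ω, σ ω) * e (A ℓ) ω) ∂P = 0 := by
      intro ℓ _
      have h := key1 (fun p : ℝ × ℝ => p.2 ^ 2 * ((1 - p.1) * p.1 ^ ℓ)) (hgm2 ℓ)
        (A ℓ) t (hAt ℓ)
      rw [← h]
      exact integral_congr_ae (ae_of_all _ fun ω => by simp only [hc]; ring)
    have hval3 : ∀ ℓ ∈ Finset.range M, ∀ k ∈ Finset.range M, k ≠ ℓ →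
        ∫ ω, (c ℓ (φ ω, σ ω) * e (A ℓ) ω) * (c k (φ ω, σ ω) * e (A k) ω) ∂P = 0 := by
      intro ℓ _ k _ hkl
      have hm : Measurable (fun p : ℝ × ℝ => c ℓ p * c k p) := (hcm ℓ).mul (hcm k)
      have h := key1 _ hm (A ℓ) (A k) (hAinj ℓ k (Ne.symm hkl))
      rw [← h]
      exact integral_congr_ae (ae_of_all _ fun ω => by ring)
    have hval4 : ∀ ℓ ∈ Finset.range M,
        ∫ ω, (c ℓ (φ ω, σ ω) * e (A ℓ) ω) * (c ℓ (φ ω, σ ω) * e (A ℓ) ω) ∂P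
          = ∫ ω, c ℓ (φ ω, σ ω) ^ 2 ∂P := by
      intro ℓ _
      have hm : Measurable (fun p : ℝ × ℝ => c ℓ p ^ 2) := (hcm ℓ).pow_const 2
      have h := key2 _ hm (A ℓ)
      rw [← h]
      exact integral_congr_ae (ae_of_all _ fun ω => by ring)
    rw [hval1, Finset.sum_eq_zero hval2]
    have hdiag : ∀ ℓ ∈ Finset.range M,
        ∑ k ∈ Finset.range M,
          ∫ ω, (c ℓ (φ ω, σ ω) * e (A ℓ) ω) * (c k (φ ω, σ ω) * e (A k) ω) ∂P
        = ∫ ω, c ℓ (φ ω, σ ω) ^ 2 ∂P := by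
      intro ℓ hℓ
      rw [Finset.sum_eq_single_of_mem ℓ hℓ (fun k hk hkl => hval3 ℓ hℓ k hk hkl)]
      exact hval4 ℓ hℓ
    rw [Finset.sum_congr rfl hdiag]
    ring
  have hIc2 : ∀ ℓ : ℕ, Integrable (fun ω => c ℓ (φ ω, σ ω) ^ 2) P := fun ℓ =>
    (hcL2 ℓ).integrable_sq
  have hGint : ∀ M, ∫ ω, (σ ω) ^ 2 ∂P + ∑ ℓ ∈ Finset.range M, ∫ ω, c ℓ (φ ω, σ ω) ^ 2 ∂P
      = ∫ ω, (σ ω) ^ 2 * (1 + (1 - φ ω) ^ 2 * ∑ ℓ ∈ Finset.range M, (φ ω ^ 2) ^ ℓ) ∂P := by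
    intro M
    rw [← integral_finset_sum _ (fun ℓ _ => hIc2 ℓ),
      ← integral_add hσ2 (integrable_finset_sum _ (fun ℓ _ => hIc2 ℓ))]
    refine integral_congr_ae (ae_of_all _ fun ω => ?_)
    simp only [mul_add, mul_one, Finset.mul_sum]
    congr 1
    exact Finset.sum_congr rfl fun ℓ _ => by simp only [hc]; ring
  have hlim : Tendsto (fun M => ∫ ω, (σ ω) ^ 2 *
        (1 + (1 - φ ω) ^ 2 * ∑ ℓ ∈ Finset.range M, (φ ω ^ 2) ^ ℓ) ∂P)
      atTop (nhds (∫ ω, (σ ω) ^ 2 * (2 * (1 + φ ω)⁻¹) ∂P)) := by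
    refine tendsto_integral_of_dominated_convergence (fun ω => (1 + 2 / ε₀) * σ ω ^ 2)
      (fun M => ?_) (hσ2.const_mul _) (fun M => ?_) ?_
    · exact ((hσm.pow_const 2).mul (measurable_const.add
        (((measurable_const.sub hφm).pow_const 2).mul
          (Finset.measurable_sum _ fun ℓ _ => (hφm.pow_const 2).pow_const ℓ)))).aestronglyMeasurable
    · filter_upwards [hφbd] with ω hω
      obtain ⟨h1, h2⟩ := hω
      have hB0 : 0 ≤ (1 - φ ω) ^ 2 * ∑ ℓ ∈ Finset.range M, (φ ω ^ 2) ^ ℓ := by positivity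
      have hB : (1 - φ ω) ^ 2 * ∑ ℓ ∈ Finset.range M, (φ ω ^ 2) ^ ℓ ≤ 2 / ε₀ := by
        rcases eq_or_lt_of_le h2 with heq1 | hlt
        · rw [← heq1]
          simp
          positivity
        · have hx0 : (0:ℝ) ≤ φ ω ^ 2 := sq_nonneg _
          have hx : φ ω ^ 2 < 1 := by nlinarith
          have hsum : ∑ ℓ ∈ Finset.range M, (φ ω ^ 2) ^ ℓ ≤ (1 - φ ω ^ 2)⁻¹ := by
            have hs := (summable_geometric_of_lt_one hx0 hx).sum_le_tsum (Finset.range M)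
              (fun i _ => pow_nonneg hx0 i)
            rwa [tsum_geometric_of_lt_one hx0 hx] at hs
          have h1φ : (0:ℝ) < 1 + φ ω := lt_of_lt_of_le hε₀ (by linarith)
          have h2φ : (0:ℝ) < 1 - φ ω := by linarith
          calc (1 - φ ω) ^ 2 * ∑ ℓ ∈ Finset.range M, (φ ω ^ 2) ^ ℓ
              ≤ (1 - φ ω) ^ 2 * (1 - φ ω ^ 2)⁻¹ :=
                mul_le_mul_of_nonneg_left hsum (sq_nonneg _)
            _ = (1 - φ ω) / (1 + φ ω) := by
                rw [show 1 - φ ω ^ 2 = (1 - φ ω) * (1 + φ ω) by ring]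
                field_simp
            _ ≤ 2 / ε₀ := div_le_div₀ (by norm_num) (by linarith) hε₀ (by linarith)
      rw [Real.norm_eq_abs, abs_of_nonneg (by positivity)]
      have h3 : σ ω ^ 2 * (1 + (1 - φ ω) ^ 2 * ∑ ℓ ∈ Finset.range M, (φ ω ^ 2) ^ ℓ)
          ≤ σ ω ^ 2 * (1 + 2 / ε₀) := mul_le_mul_of_nonneg_left (by linarith) (sq_nonneg _)
      exact h3.trans_eq (mul_comm _ _)
    · filter_upwards [hφbd] with ω hω
      obtain ⟨h1, h2⟩ := hω
      rcases eq_or_lt_of_le h2 with heq1 | hlt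
      · have hcst : ∀ M : ℕ, σ ω ^ 2 *
            (1 + (1 - φ ω) ^ 2 * ∑ ℓ ∈ Finset.range M, (φ ω ^ 2) ^ ℓ)
            = σ ω ^ 2 * (2 * (1 + φ ω)⁻¹) := by
          intro M; rw [heq1]; norm_num
        simp only [hcst]
        exact tendsto_const_nhds
      · have hx0 : (0:ℝ) ≤ φ ω ^ 2 := sq_nonneg _
        have hx : φ ω ^ 2 < 1 := by nlinarith
        have h1φ : (0:ℝ) < 1 + φ ω := lt_of_lt_of_le hε₀ (by linarith)
        have h2φ : (0:ℝ) < 1 - φ ω := by linarith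
        have hgeo := (hasSum_geometric_of_lt_one hx0 hx).tendsto_sum_nat
        have hT : Tendsto (fun M => σ ω ^ 2 *
            (1 + (1 - φ ω) ^ 2 * ∑ ℓ ∈ Finset.range M, (φ ω ^ 2) ^ ℓ)) atTop
            (nhds (σ ω ^ 2 * (1 + (1 - φ ω) ^ 2 * (1 - φ ω ^ 2)⁻¹))) :=
          ((hgeo.const_mul ((1 - φ ω) ^ 2)).const_add 1).const_mul (σ ω ^ 2)
        have hvaleq : σ ω ^ 2 * (1 + (1 - φ ω) ^ 2 * (1 - φ ω ^ 2)⁻¹)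
            = σ ω ^ 2 * (2 * (1 + φ ω)⁻¹) := by
          rw [show 1 - φ ω ^ 2 = (1 - φ ω) * (1 + φ ω) by ring]
          field_simp
          ring
        rw [← hvaleq]
        exact hT
  have hfinal : ∫ ω, (σ ω) ^ 2 * (2 * (1 + φ ω)⁻¹) ∂P
      = 2 * (∫ ω, (σ ω) ^ 2 ∂P) * (∫ ω, 1 / (1 + φ ω) ∂P) := by
    have hgm : Measurable (fun x : ℝ => 2 * (1 + x)⁻¹) :=
      measurable_const.mul (measurable_const.add measurable_id).inv
    have hi : IndepFun (fun ω => (σ ω) ^ 2) (fun ω => 2 * (1 + φ ω)⁻¹) P :=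
      hφσ.symm.comp (measurable_id.pow_const 2) hgm
    rw [hi.integral_fun_mul_eq_mul_integral (hσm.pow_const 2).aestronglyMeasurable
      ((hgm.comp hφm).aestronglyMeasurable)]
    rw [integral_const_mul]
    simp only [one_div]
    ring
  have hae : ∀ᵐ ω ∂P, ∀ ℓ : ℤ, ε ℓ ω = e ℓ ω := ae_all_iff.2 fun ℓ => heq ℓ
  have hL2' : Tendsto (fun M : ℕ => eLpNorm (fun ω => X M ω - Δy t ω) 2 P) atTop (nhds 0) := by
    refine (hΔL2 t).congr fun M => ?_
    refine eLpNorm_congr_ae ?_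
    filter_upwards [hae] with ω hω
    have hs : σ ω * ((1 - φ ω) * ∑ ℓ ∈ Finset.range M, φ ω ^ ℓ * ε (t - ((ℓ:ℤ) + 1)) ω)
        = ∑ ℓ ∈ Finset.range M, c ℓ (φ ω, σ ω) * e (A ℓ) ω := by
      simp only [Finset.mul_sum]
      refine Finset.sum_congr rfl fun ℓ _ => ?_
      rw [hω (t - ((ℓ:ℤ) + 1))]
      simp only [hc, hA]
      ring
    simp only [hX]
    rw [mul_sub, hs, hω t]
  refine ⟨?_, ?_⟩
  · have hconv := aux_tendsto_integral hXL2 (hΔ2 t) hL2'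
    have hzero : Tendsto (fun M => ∫ ω, X M ω ∂P) atTop (nhds 0) := by
      simp only [hmean0]; exact tendsto_const_nhds
    exact tendsto_nhds_unique hconv hzero
  · have hconv := aux_tendsto_integral_sq hXL2 (hΔ2 t) hL2'
    have hval : Tendsto (fun M => ∫ ω, (X M ω) ^ 2 ∂P) atTop
        (nhds (2 * (∫ ω, (σ ω) ^ 2 ∂P) * (∫ ω, 1 / (1 + φ ω) ∂P))) := by
      rw [← hfinal]
      have hh : (fun M => ∫ ω, (X M ω) ^ 2 ∂P)
          = fun M => ∫ ω, (σ ω) ^ 2 *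
            (1 + (1 - φ ω) ^ 2 * ∑ ℓ ∈ Finset.range M, (φ ω ^ 2) ^ ℓ) ∂P := by
        funext M; rw [hsqint M, hGint M]
      rw [hh]; exact hlim
    exact tendsto_nhds_unique hconv hval
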